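/- In a directed acyclic graph D with m edges, any circulation f with f(e) ≥ −δ for all edges e satisfies f(e) ≤ δ·m for every edge e. -/
import Mathlib


open BigOperators

/-- In a directed acyclic graph with `m` edges (acyclicity: no edge closes a directed
cycle), any circulation `f` with `f(e) ≥ −δ` on every edge satisfies `f(e) ≤ δ·m`. -/
theorem stmt_7 {V E : Type*} [Fintype V] [Fintype E] [DecidableEq V]
    (s t : E → V) (f : E → ℝ) (δ : ℝ) (hδ : 0 ≤ δ)
    (hacyclic : ∀ e : E,
      ¬ Relation.ReflTransGen (fun a b => ∃ e', s e' = a ∧ t e' = b) (t e) (s e))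
    (hcirc : ∀ v : V, (∑ e, if t e = v then f e else 0) = ∑ e, if s e = v then f e else 0)
    (hlow : ∀ e, -δ ≤ f e) :
    ∀ e, f e ≤ δ * (Fintype.card E : ℝ) := by
  classical
  intro e0
  set U : Set V :=
    {v | Relation.ReflTransGen (fun a b => ∃ e', s e' = a ∧ t e' = b) (t e0) v} with hUdef
  have htU : t e0 ∈ U := Relation.ReflTransGen.refl
  have hsU : s e0 ∉ U := hacyclic e0
  have hclosed : ∀ e, s e ∈ U → t e ∈ U := fun e h => h.tail ⟨e, rfl, rfl⟩
  have key : ∑ e, (if t e ∈ U then f e else 0) = ∑ e, (if s e ∈ U then f e else 0) := by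
    have h1 : ∀ (g : E → V), ∑ e, (if g e ∈ U then f e else 0)
        = ∑ v ∈ Finset.univ.filter (· ∈ U), ∑ e, (if g e = v then f e else 0) := by
      intro g
      rw [Finset.sum_comm]
      apply Finset.sum_congr rfl
      intro e _
      rw [Finset.sum_ite_eq (Finset.univ.filter (· ∈ U)) (g e) (fun _ => f e)]
      simp
    rw [h1 t, h1 s]
    exact Finset.sum_congr rfl (fun v _ => hcirc v)
  set g : E → ℝ := fun e => if t e ∈ U ∧ s e ∉ U then f e else 0 with hgdef
  have hsumg : ∑ e, g e = 0 := by
    have hsplit : ∀ e, (if t e ∈ U then f e else 0)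
        = (if s e ∈ U then f e else 0) + g e := by
      intro e
      by_cases h1 : s e ∈ U
      · simp [hgdef, h1, hclosed e h1]
      · by_cases h2 : t e ∈ U <;> simp [hgdef, h1, h2]
    have : ∑ e, (if t e ∈ U then f e else 0)
        = ∑ e, (if s e ∈ U then f e else 0) + ∑ e, g e := by
      rw [← Finset.sum_add_distrib]
      exact Finset.sum_congr rfl (fun e _ => hsplit e)
    linarith [key, this]
  have hge0 : g e0 = f e0 := by simp [hgdef, htU, hsU]
  have hsplit0 : ∑ e, g e = g e0 + ∑ e ∈ Finset.univ.erase e0, g e :=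
    (Finset.add_sum_erase Finset.univ g (Finset.mem_univ e0)).symm
  have hfe0 : f e0 = ∑ e ∈ Finset.univ.erase e0, (-g e) := by
    rw [Finset.sum_neg_distrib]
    have := hsplit0
    rw [hsumg, hge0] at this
    linarith
  have hbound : ∀ e, -g e ≤ δ := by
    intro e
    by_cases h : t e ∈ U ∧ s e ∉ U
    · simp only [hgdef, if_pos h]
      linarith [hlow e]
    · simp [hgdef, h, hδ]
  calc f e0 = ∑ e ∈ Finset.univ.erase e0, (-g e) := hfe0
    _ ≤ ∑ _e ∈ Finset.univ.erase e0, δ :=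
        Finset.sum_le_sum (fun e _ => hbound e)
    _ = (Finset.univ.erase e0).card • δ := by rw [Finset.sum_const]
    _ = ((Finset.univ.erase e0).card : ℝ) * δ := by rw [nsmul_eq_mul]
    _ ≤ (Fintype.card E : ℝ) * δ := by
        have : (Finset.univ.erase e0).card ≤ Fintype.card E :=
          le_trans (Finset.card_erase_le) (le_of_eq rfl)
        exact mul_le_mul_of_nonneg_right (by exact_mod_cast this) hδ
    _ = δ * (Fintype.card E : ℝ) := mul_comm _ _
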